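/- Define 𝒟_{m,n} = ∫_{−1}^{1} x² p_m(x) p_n(x) dx, where p_n(x) = √(n + 1/2) · P_n(x) are the orthonormal Legendre polynomials. Then for every n ∈ ℕ, 𝒟_{n+2,n} = 𝒟_{n,n+2} = (n+1)(n+2)/((2n+3)√((2n+1)(2n+5))). -/

import Mathlib

open Polynomial intervalIntegral Nat

noncomputable def Wp (n : ℕ) : ℝ[X] := (X ^ 2 - 1) ^ n

lemma intInt (p : ℝ[X]) : IntervalIntegrable (fun x => p.eval x) MeasureTheory.volume (-1) 1 :=
  p.continuous.intervalIntegrable _ _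

lemma iteratedDeriv_eval (p : ℝ[X]) (k : ℕ) (x : ℝ) :
    iteratedDeriv k (fun y : ℝ => p.eval y) x = (derivative^[k] p).eval x := by
  induction k generalizing p x with
  | zero => simp
  | succ k ih =>
    rw [iteratedDeriv_succ', Function.iterate_succ_apply]
    simp only [← ih (derivative p)]
    congr 1
    funext y
    exact (p.hasDerivAt y).deriv

lemma integral_eval_derivative (p : ℝ[X]) :
    ∫ x in (-1:ℝ)..1, (derivative p).eval x = p.eval 1 - p.eval (-1) :=
  intervalIntegral.integral_eq_sub_of_hasDerivAt (fun x _ => p.hasDerivAt x)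
    (intInt _)

lemma ibp (p q : ℝ[X]) :
    ∫ x in (-1:ℝ)..1, (derivative p).eval x * q.eval x
      = (p.eval 1 * q.eval 1 - p.eval (-1) * q.eval (-1))
        - ∫ x in (-1:ℝ)..1, p.eval x * (derivative q).eval x := by
  have h := integral_eval_derivative (p * q)
  rw [derivative_mul] at h
  have h2 : ∫ x in (-1:ℝ)..1, (derivative p * q + p * derivative q).eval x
      = (∫ x in (-1:ℝ)..1, (derivative p).eval x * q.eval x)
        + ∫ x in (-1:ℝ)..1, p.eval x * (derivative q).eval x := by
    rw [← intervalIntegral.integral_add ((intInt (derivative p * q)).congr ?_)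
      ((intInt (p * derivative q)).congr ?_)] <;> simp [Filter.EventuallyEq, Set.EqOn]
  simp only [eval_mul] at h
  rw [h2] at h
  linarith

lemma Wp_factor (n : ℕ) : ∀ m, m ≤ n → ∃ r : ℝ[X],
    derivative^[m] (Wp n) = (X ^ 2 - 1) ^ (n - m) * r := by
  intro m
  induction m with
  | zero => exact fun _ => ⟨1, by simp [Wp]⟩
  | succ m ih =>
    intro hm
    obtain ⟨r, hr⟩ := ih (Nat.le_of_succ_le hm)
    refine ⟨C ((n : ℝ) - m) * derivative (X ^ 2 - 1) * r + (X ^ 2 - 1) * derivative r, ?_⟩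
    rw [Function.iterate_succ_apply', hr]
    have hnm : n - m = (n - (m + 1)) + 1 := by omega
    rw [derivative_mul, derivative_pow, hnm]
    simp only [Nat.add_sub_cancel]
    have : ((n - (m + 1) + 1 : ℕ) : ℝ) = (n : ℝ) - m := by
      have h' : n - (m + 1) + 1 = n - m := by omega
      rw [h', Nat.cast_sub (Nat.le_of_succ_le hm)]
    rw [this]
    ring

lemma Wp_eval_boundary (n m : ℕ) (hm : m < n) (x : ℝ) (hx : x ^ 2 = 1) :
    (derivative^[m] (Wp n)).eval x = 0 := by
  obtain ⟨r, hr⟩ := Wp_factor n m hm.le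
  have : n - m ≠ 0 := by omega
  simp [hr, hx, zero_pow this]

lemma key_ibp (n : ℕ) (f : ℝ[X]) : ∀ k, k ≤ n →
    (∫ x in (-1:ℝ)..1, (derivative^[n] (Wp n)).eval x * f.eval x)
      = (-1 : ℝ) ^ k *
        ∫ x in (-1:ℝ)..1, (derivative^[n - k] (Wp n)).eval x * (derivative^[k] f).eval x := by
  intro k
  induction k with
  | zero => simp
  | succ k ih =>
    intro hk
    rw [ih (Nat.le_of_succ_le hk)]
    have hnk : n - k = (n - (k + 1)) + 1 := by omega
    rw [hnk, Function.iterate_succ_apply']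
    rw [ibp (derivative^[n - (k+1)] (Wp n)) (derivative^[k] f)]
    rw [Wp_eval_boundary n _ (by omega) 1 (by norm_num),
        Wp_eval_boundary n _ (by omega) (-1) (by norm_num)]
    rw [← Function.iterate_succ_apply' derivative k f]
    ring

lemma iterate_derivative_of_natDegree_le (p : ℝ[X]) (k : ℕ) (h : p.natDegree ≤ k) :
    derivative^[k] p = C ((k)! * p.coeff k) := by
  have hd : (derivative^[k] p).natDegree = 0 := by
    have := p.natDegree_iterate_derivative k
    omega
  have := Polynomial.eq_C_of_natDegree_eq_zero hd
  rw [this, Polynomial.coeff_iterate_derivative]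
  simp [Nat.descFactorial_self, nsmul_eq_mul]

lemma natDegree_Wp (n : ℕ) : (Wp n).natDegree = 2 * n := by
  rw [Wp]
  have h1 : (X ^ 2 - 1 : ℝ[X]) = X ^ 2 - C 1 := by simp
  rw [h1, natDegree_pow, natDegree_X_pow_sub_C, mul_comm]

lemma monic_Wp (n : ℕ) : (Wp n).Monic := by
  have h1 : (X ^ 2 - 1 : ℝ[X]) = X ^ 2 - C 1 := by simp
  rw [Wp, h1]
  exact (monic_X_pow_sub_C (1 : ℝ) two_ne_zero).pow n

lemma integral_Wp (n : ℕ) :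
    ∫ x in (-1:ℝ)..1, (Wp n).eval x
      = (-1 : ℝ) ^ n * 2 ^ (2 * n + 1) * (n ! : ℝ) ^ 2 / ((2 * n + 1)! : ℝ) := by
  induction n with
  | zero => norm_num [Wp]
  | succ n ih =>
    have hder : derivative (X * (X ^ 2 - 1) ^ (n + 1) : ℝ[X])
        = C ((2 * n + 3 : ℕ) : ℝ) * Wp (n + 1) + C ((2 * n + 2 : ℕ) : ℝ) * Wp n := by
      rw [derivative_mul, derivative_pow, Wp, Wp]
      have hx : (X ^ 2 - 1 : ℝ[X]) ^ (n + 1) = (X ^ 2 - 1) ^ n * (X ^ 2 - 1) := pow_succ _ _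
      rw [hx]
      push_cast
      simp [derivative_X, derivative_pow, map_ofNat]
      ring
    have h0 := integral_eval_derivative (X * (X ^ 2 - 1) ^ (n + 1) : ℝ[X])
    rw [hder] at h0
    simp only [eval_add, eval_mul, eval_C] at h0
    rw [intervalIntegral.integral_add
        ((intInt (C ((2 * n + 3 : ℕ) : ℝ) * Wp (n + 1))).congr (by simp [Filter.EventuallyEq, Set.EqOn]))
        ((intInt (C ((2 * n + 2 : ℕ) : ℝ) * Wp n)).congr (by simp [Filter.EventuallyEq, Set.EqOn])),
      intervalIntegral.integral_const_mul, intervalIntegral.integral_const_mul] at h0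
    norm_num at h0
    rw [ih] at h0
    have h3 : ((2 * n + 3 : ℕ) : ℝ) ≠ 0 := by positivity
    have hI : (∫ x in (-1:ℝ)..1, (Wp (n + 1)).eval x)
        = -((2 * n + 2 : ℕ) : ℝ) / ((2 * n + 3 : ℕ) : ℝ)
          * ((-1 : ℝ) ^ n * 2 ^ (2 * n + 1) * (n ! : ℝ) ^ 2 / ((2 * n + 1)! : ℝ)) := by
      field_simp at h0 ⊢
      push_cast at h0 ⊢
      linarith
    rw [hI]
    have hf1 : ((2 * (n + 1) + 1)! : ℝ) = ((2 * n + 3 : ℕ) : ℝ) * ((2 * n + 2 : ℕ) : ℝ) * ((2 * n + 1)! : ℝ) := by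
      have : 2 * (n + 1) + 1 = (2 * n + 2) + 1 := by ring
      rw [this, Nat.factorial_succ, Nat.factorial_succ]
      push_cast
      ring
    have hf2 : ((n + 1)! : ℝ) = ((n : ℝ) + 1) * (n ! : ℝ) := by
      rw [Nat.factorial_succ]; push_cast; ring
    have hfpos : ((2 * n + 1)! : ℝ) ≠ 0 := by positivity
    rw [hf1, hf2]
    push_cast
    field_simp
    ring

/-- The Legendre polynomial via the Rodrigues formula
`P_n(x) = (1/(2^n n!)) dⁿ/dxⁿ (x² − 1)ⁿ`. -/
noncomputable def legendreP (n : ℕ) (x : ℝ) : ℝ :=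
  (1 / ((2 : ℝ) ^ n * Nat.factorial n)) * iteratedDeriv n (fun y : ℝ => (y ^ 2 - 1) ^ n) x

noncomputable def pLeg (n : ℕ) (x : ℝ) : ℝ :=
  Real.sqrt ((n : ℝ) + 1 / 2) * legendreP n x

noncomputable def Dleg (m n : ℕ) : ℝ :=
  ∫ x in (-1 : ℝ)..1, x ^ 2 * pLeg m x * pLeg n x

lemma legendreP_eq (m : ℕ) (x : ℝ) :
    legendreP m x = (1 / ((2 : ℝ) ^ m * m !)) * (derivative^[m] (Wp m)).eval x := by
  rw [legendreP, ← iteratedDeriv_eval]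
  congr 2
  funext y
  simp [Wp]

lemma Dleg_main (n : ℕ) : Dleg (n + 2) n = ((n : ℝ) + 1) * (n + 2) /
    ((2 * (n : ℝ) + 3) * Real.sqrt ((2 * n + 1) * (2 * n + 5))) := by
  set f : ℝ[X] := X ^ 2 * derivative^[n] (Wp n) with hf
  set K : ℝ := Real.sqrt ((n : ℝ) + 2 + 1 / 2) * Real.sqrt ((n : ℝ) + 1 / 2) *
      (1 / ((2 : ℝ) ^ (n + 2) * (n + 2)!)) * (1 / ((2 : ℝ) ^ n * n !)) with hK
  have step1 : Dleg (n + 2) n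
      = K * ∫ x in (-1:ℝ)..1, (derivative^[n + 2] (Wp (n + 2))).eval x * f.eval x := by
    rw [Dleg, ← intervalIntegral.integral_const_mul]
    apply intervalIntegral.integral_congr
    intro x _
    simp only [pLeg, legendreP_eq, hf, hK, eval_mul, eval_pow, eval_X]
    push_cast
    ring
  -- degree bound for f
  have hdegf : f.natDegree ≤ n + 2 := by
    refine le_trans (natDegree_mul_le) ?_
    have h1 : (X ^ 2 : ℝ[X]).natDegree ≤ 2 := natDegree_X_pow_le 2
    have h2 : (derivative^[n] (Wp n)).natDegree ≤ n := by
      have := (Wp n).natDegree_iterate_derivative n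
      rw [natDegree_Wp] at this
      omega
    omega
  have hDf : derivative^[n + 2] f = C (((n + 2)! : ℝ) * f.coeff (n + 2)) :=
    iterate_derivative_of_natDegree_le f (n + 2) hdegf
  have hcoef : f.coeff (n + 2) = (((2 * n).descFactorial n : ℕ) : ℝ) := by
    rw [hf, Polynomial.coeff_X_pow_mul, Polynomial.coeff_iterate_derivative]
    have h2n : n + n = 2 * n := by ring
    have : (Wp n).coeff (2 * n) = 1 := by
      have := (monic_Wp n).leadingCoeff
      rwa [Polynomial.leadingCoeff, natDegree_Wp] at this
    rw [h2n, this]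
    simp
  have step2 : (∫ x in (-1:ℝ)..1, (derivative^[n + 2] (Wp (n + 2))).eval x * f.eval x)
      = (-1 : ℝ) ^ (n + 2) * (((n + 2)! : ℝ) * (((2 * n).descFactorial n : ℕ) : ℝ))
        * ∫ x in (-1:ℝ)..1, (Wp (n + 2)).eval x := by
    rw [key_ibp (n + 2) f (n + 2) le_rfl]
    simp only [Nat.sub_self, Function.iterate_zero, id_eq, hDf, hcoef, eval_C]
    rw [intervalIntegral.integral_mul_const]
    ring
  rw [step1, step2, integral_Wp (n + 2)]
  set s : ℝ := Real.sqrt ((2 * (n : ℝ) + 1) * (2 * (n : ℝ) + 5)) with hs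
  have hSpos : (0:ℝ) < (2 * (n : ℝ) + 1) * (2 * (n : ℝ) + 5) := by positivity
  have hs2 : s ^ 2 = (2 * (n : ℝ) + 1) * (2 * (n : ℝ) + 5) := Real.sq_sqrt hSpos.le
  have hspos : 0 < s := Real.sqrt_pos.mpr hSpos
  have hsqrt : Real.sqrt ((n : ℝ) + 2 + 1 / 2) * Real.sqrt ((n : ℝ) + 1 / 2) = s / 2 := by
    rw [← Real.sqrt_mul (by positivity)]
    rw [show ((n:ℝ) + 2 + 1/2) * ((n:ℝ) + 1/2)
        = ((2 * (n : ℝ) + 1) * (2 * (n : ℝ) + 5)) * (1/2)^2 by ring]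
    rw [Real.sqrt_mul hSpos.le, Real.sqrt_sq (by norm_num)]
    rw [hs]; ring
  have hdn : (n ! : ℝ) * (((2 * n).descFactorial n : ℕ) : ℝ) = ((2 * n)! : ℝ) := by
    have h := Nat.factorial_mul_descFactorial (show n ≤ 2 * n by omega)
    rw [show 2 * n - n = n by omega] at h
    exact_mod_cast congrArg (Nat.cast : ℕ → ℝ) h
  have hfact1 : ((n + 2)! : ℝ) = ((n:ℝ) + 2) * ((n:ℝ) + 1) * (n ! : ℝ) := by
    rw [show n + 2 = (n + 1) + 1 from rfl, Nat.factorial_succ, Nat.factorial_succ]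
    push_cast; ring
  have hfact2 : ((2 * (n + 2) + 1)! : ℝ)
      = (2*(n:ℝ)+5) * (2*(n:ℝ)+4) * (2*(n:ℝ)+3) * (2*(n:ℝ)+2) * (2*(n:ℝ)+1) * ((2 * n)! : ℝ) := by
    rw [show 2 * (n + 2) + 1 = (2*n+4) + 1 by ring, Nat.factorial_succ,
        show 2*n+4 = (2*n+3)+1 from rfl, Nat.factorial_succ,
        show 2*n+3 = (2*n+2)+1 from rfl, Nat.factorial_succ,
        show 2*n+2 = (2*n+1)+1 from rfl, Nat.factorial_succ,
        show 2*n+1 = (2*n)+1 from rfl, Nat.factorial_succ]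
    push_cast; ring
  have hpow : (2:ℝ) ^ (2 * (n + 2) + 1) = 2 ^ (n + 2) * 2 ^ n * 8 := by
    rw [show 2 * (n + 2) + 1 = (n + 2) + n + 3 by ring, pow_add, pow_add]
    norm_num
  have hne : (n ! : ℝ) ≠ 0 := by positivity
  have hne2 : ((2*n)! : ℝ) ≠ 0 := by positivity
  have hne3 : (2:ℝ) ^ (n+2) ≠ 0 := by positivity
  have hne4 : (2:ℝ) ^ n ≠ 0 := by positivity
  have hd' : (((2 * n).descFactorial n : ℕ) : ℝ) = ((2 * n)! : ℝ) / (n ! : ℝ) := by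
    rw [eq_div_iff hne, mul_comm]; exact hdn
  rw [hK, hsqrt, hd', hfact1, hfact2, hpow]
  have h23 : (2 * (n:ℝ) + 3) ≠ 0 := by positivity
  rw [eq_div_iff (mul_ne_zero h23 hspos.ne')]
  field_simp
  ring_nf
  rw [show n * 2 = 2 * n by ring, pow_mul]
  norm_num
  ring_nf
  rw [hs2]
  ring

/-- `𝒟_{n+2,n} = 𝒟_{n,n+2} = (n+1)(n+2)/((2n+3)√((2n+1)(2n+5)))` for all `n ∈ ℕ`. -/
theorem Dleg_offdiag (n : ℕ) :
    Dleg (n + 2) n = ((n : ℝ) + 1) * (n + 2) /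
        ((2 * (n : ℝ) + 3) * Real.sqrt ((2 * n + 1) * (2 * n + 5))) ∧
    Dleg n (n + 2) = ((n : ℝ) + 1) * (n + 2) /
        ((2 * (n : ℝ) + 3) * Real.sqrt ((2 * n + 1) * (2 * n + 5))) := by
  have h := Dleg_main n
  refine ⟨h, ?_⟩
  have hsym : Dleg n (n + 2) = Dleg (n + 2) n := by
    unfold Dleg
    apply intervalIntegral.integral_congr
    intro x _
    ring
  rw [hsym]
  exact h
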